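/- Let [r_0, ..., r_n] be an admissible list of integers and let M = A(r_0)·A(r_1)·...·A(r_n) = [[a, b], [c, d]]. Then the reversed list [r_n, ..., r_0] has a well-defined NCF value, and this value equals −a/b. In the paper's notation: if A(r_0)···A(r_n) = [[q, q'], [−p, −p']], so that −q/p has NCF expansion [r_0, ..., r_n], then −q/q' has NCF expansion [r_n, ..., r_0]. -/

import Mathlib

/-- The negative continued fraction (NCF) value of a list of integers:
`ncfVal [rₙ] = rₙ` and `ncfVal (rₖ :: l) = rₖ - 1 / ncfVal l`.
(Junk value `0` for the empty list; recall division by zero in `ℚ` is `0`,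
so the value is "well defined" precisely when all proper tails have nonzero value.) -/
def ncfVal : List ℤ → ℚ
  | [] => 0
  | [r] => (r : ℚ)
  | r :: s :: l => (r : ℚ) - 1 / ncfVal (s :: l)

/-- A list `[r₀, …, rₙ]` is admissible if `r₀ ≤ -1` and `rᵢ ≤ -2` for `1 ≤ i ≤ n`. -/
def Admissible : List ℤ → Prop
  | [] => False
  | r :: l => r ≤ -1 ∧ ∀ s ∈ l, s ≤ -2

/-- The matrix `A(r)` with first row `(-r, 1)` and second row `(-1, 0)`. -/
def A (r : ℤ) : Matrix (Fin 2) (Fin 2) ℤ := !![-r, 1; -1, 0]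

lemma ncfVal_cons_cons (s : ℤ) (t : List ℤ) (ht : t ≠ []) :
    ncfVal (s :: t) = (s : ℚ) - 1 / ncfVal t := by
  cases t with
  | nil => exact absurd rfl ht
  | cons a t => rfl

lemma ncfVal_le_neg_one (M : List ℤ) (r : ℤ) (hr : r ≤ -1)
    (hM : ∀ x ∈ M, x ≤ -2) : ncfVal (M ++ [r]) ≤ -1 := by
  induction M with
  | nil =>
    simp only [List.nil_append, ncfVal]
    exact_mod_cast hr
  | cons s M ih =>
    have hs : s ≤ -2 := hM s List.mem_cons_self
    have hv : ncfVal (M ++ [r]) ≤ -1 :=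
      ih (fun x hx => hM x (List.mem_cons_of_mem _ hx))
    rw [List.cons_append, ncfVal_cons_cons s (M ++ [r]) (by simp)]
    have hvneg : ncfVal (M ++ [r]) < 0 := lt_of_le_of_lt hv (by norm_num)
    have h1 : -1 ≤ 1 / ncfVal (M ++ [r]) := by
      rw [le_div_iff_of_neg hvneg]; linarith
    have hs' : (s : ℚ) ≤ -2 := by exact_mod_cast hs
    linarith

lemma ncf_matrix (M : List ℤ) (r : ℤ) (hr : r ≤ -1)
    (hM : ∀ x ∈ M, x ≤ -2) :
    ncfVal (M ++ [r]) =
      -((((M ++ [r]).reverse.map A).prod 0 0 : ℤ) : ℚ) /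
        ((((M ++ [r]).reverse.map A).prod 0 1 : ℤ) : ℚ) := by
  induction M with
  | nil =>
    simp [ncfVal, A]
  | cons s M ih =>
    have hM' : ∀ x ∈ M, x ≤ -2 := fun x hx => hM x (List.mem_cons_of_mem _ hx)
    have ih' := ih hM'
    set t := M ++ [r] with ht
    set P := (t.reverse.map A).prod with hP
    have hle : ncfVal t ≤ -1 := ncfVal_le_neg_one M r hr hM'
    have hvne : ncfVal t ≠ 0 := by intro h0; rw [h0] at hle; norm_num at hle
    have ha : ((P 0 0 : ℤ) : ℚ) ≠ 0 := by
      intro h0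
      apply hvne
      rw [ih', h0]
      simp
    have hb : ((P 0 1 : ℤ) : ℚ) ≠ 0 := by
      intro h0
      apply hvne
      rw [ih', h0]
      simp
    have hprod : ((s :: t).reverse.map A).prod = P * A s := by
      rw [List.reverse_cons, List.map_append, List.prod_append]
      simp [hP]
    rw [List.cons_append]
    rw [ncfVal_cons_cons s t (by simp [ht]), ih']
    have e00 : (P * A s) 0 0 = P 0 0 * (-s) + P 0 1 * (-1) := by
      simp [Matrix.mul_apply, Fin.sum_univ_two, A]
    have e01 : (P * A s) 0 1 = P 0 0 := by
      simp [Matrix.mul_apply, Fin.sum_univ_two, A]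
    show _ = -((((s :: t).reverse.map A).prod 0 0 : ℤ) : ℚ) /
        ((((s :: t).reverse.map A).prod 0 1 : ℤ) : ℚ)
    rw [hprod, e00, e01]
    push_cast
    field_simp
    ring

/-- For an admissible list `[r₀, …, rₙ]` with
`M = A(r₀) ⋯ A(rₙ) = [[a, b], [c, d]]`, the reversed list `[rₙ, …, r₀]` has a
well-defined NCF value (all proper tails have nonzero value), and this value
equals `-a/b`. -/
theorem ncf_reverse_value (L : List ℤ) (h : Admissible L) :
    (∀ k : ℕ, 1 ≤ k → k ≤ L.length - 1 → ncfVal (L.reverse.drop k) ≠ 0) ∧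
    ncfVal L.reverse =
      -((L.map A).prod 0 0 : ℚ) / ((L.map A).prod 0 1 : ℚ) := by
  cases L with
  | nil => exact absurd h (by simp [Admissible])
  | cons r l =>
    obtain ⟨hr, hl⟩ := h
    constructor
    · intro k hk1 hk2
      have hk2' : k ≤ l.reverse.length := by
        simpa using hk2
      rw [List.reverse_cons, List.drop_append_of_le_length hk2']
      have hle : ncfVal (l.reverse.drop k ++ [r]) ≤ -1 :=
        ncfVal_le_neg_one _ r hr (fun x hx =>
          hl x (List.mem_reverse.mp (List.mem_of_mem_drop hx)))
      intro h0; rw [h0] at hle; norm_num at hle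
    · have := ncf_matrix l.reverse r hr (fun x hx => hl x (List.mem_reverse.mp hx))
      rw [List.reverse_cons]
      simpa using this
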